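/- arXiv:1802.06546 — 2 statements merged into one kernel-verified Lean document; each statement's English description precedes it below -/
import Mathlib

section
/- Let m1, m2 be positive integers with m2 even. The functions χ_γ for γ ∈ Γ(m) form an orthogonal basis of the m1m2-dimensional complex inner product space of functions on I(m) with inner product ⟨f,g⟩ = (1/(m1m2)) Σ_{i∈I(m)} f(i) conj(g(i)). Moreover ‖χ_γ‖² = 1 if γ1 ∈ {0, m1} and ‖χ_γ‖² = 1/2 otherwise. -/
open Real Complex

/-- The index set I(m) as a finset. -/
def indexSet (m1 m2 : ℕ) : Finset (ℕ × ℕ) :=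
  (Finset.range (m1 + 1) ×ˢ Finset.range (2 * m2)).filter
    (fun i => ((i.1 = 0 ∨ i.1 = m1) → i.2 < m2) ∧ Even (i.1 + i.2))

/-- The spectral index set Γ(m) = Γ̄(m) \ Γ^U, with the defining inequalities
γ₁/m₁ + |γ₂|/m₂ ≤ 1 and γ₁/m₁ + γ₂/m₂ = 1 written in the equivalent
denominator-cleared integer form. -/
noncomputable def GammaSet (m1 m2 : ℕ) : Finset (ℤ × ℤ) :=
  ((Finset.Icc (0 : ℤ) m1) ×ˢ (Finset.Icc (-(m2 : ℤ)) m2)).filter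
    (fun γ => ((1 ≤ γ.1 ∧ (m2 : ℤ) * γ.1 + (m1 : ℤ) * |γ.2| ≤ m1 * m2) ∨
        (γ.1 = 0 ∧ Even γ.2 ∧ |γ.2| < (m2 : ℤ))) ∧
      ¬((m2 : ℤ) * γ.1 + (m1 : ℤ) * γ.2 = m1 * m2 ∧ γ.2 ≠ 0))

/-- The discretized parity-modified Fourier basis functions χ_γ. -/
noncomputable def chi (m1 m2 : ℕ) (γ : ℤ × ℤ) (i : ℕ × ℕ) : ℂ :=
  if Even γ.2 then
    (Real.cos ((γ.1 : ℝ) * i.1 * π / m1) : ℂ) *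
      Complex.exp (Complex.I * γ.2 * i.2 * (π : ℂ) / m2)
  else
    Complex.I * (Real.sin ((γ.1 : ℝ) * i.1 * π / m1) : ℂ) *
      Complex.exp (Complex.I * γ.2 * i.2 * (π : ℂ) / m2)

/-- The discrete inner product on functions on I(m). -/
noncomputable def discInner (m1 m2 : ℕ) (f h : ℕ × ℕ → ℂ) : ℂ :=
  (1 / (m1 * m2 : ℂ)) * ∑ i ∈ indexSet m1 m2, f i * (starRingEnd ℂ) (h i)

/-! ### Auxiliary definitions -/

noncomputable def eu (m : ℕ) (t : ℤ) (k : ℕ) : ℂ :=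
  Complex.exp (Complex.I * t * k * (π:ℂ) / m)

noncomputable def sgn (b : ℤ) : ℂ := if Even b then 1 else -1

noncomputable def Dm (m : ℕ) (t : ℤ) : ℂ := if (2*(m:ℤ)) ∣ t then ((2*m : ℕ) : ℂ) else 0

noncomputable def Tt (m1 : ℕ) (γ γ' : ℤ × ℤ) (k : ℤ) : ℂ :=
  Dm m1 (γ.1 - γ'.1 + k) + sgn γ'.2 * Dm m1 (γ.1 + γ'.1 + k)
    + sgn γ.2 * Dm m1 (-γ.1 - γ'.1 + k) + sgn γ.2 * sgn γ'.2 * Dm m1 (γ'.1 - γ.1 + k)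

def Lset (m1 m2 : ℕ) : Finset (ℕ × ℕ) :=
  (Finset.range (2*m1) ×ˢ Finset.range (2*m2)).filter (fun i => Even (i.1 + i.2))

def gmap (m1 m2 : ℕ) (j : ℕ × ℕ) : ℕ × ℕ :=
  (if j.1 = 0 then 0 else 2*m1 - j.1, (j.2 + m2) % (2*m2))

/-! ### Basic lemmas about `eu` -/

lemma eu_add (m : ℕ) (t u : ℤ) (k : ℕ) : eu m (t+u) k = eu m t k * eu m u k := by
  rw [eu, eu, eu, ← Complex.exp_add]; congr 1; push_cast; ring

lemma eu_zero (m : ℕ) (t : ℤ) : eu m t 0 = 1 := by simp [eu]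

lemma eu_t_zero (m : ℕ) (k : ℕ) : eu m 0 k = 1 := by simp [eu]

lemma conj_eu (m : ℕ) (t : ℤ) (k : ℕ) :
    (starRingEnd ℂ) (eu m t k) = eu m (-t) k := by
  rw [eu, eu, ← Complex.exp_conj]; congr 1
  simp only [map_div₀, map_mul, Complex.conj_I, Complex.conj_ofReal,
    map_intCast, map_natCast]
  push_cast; ring

lemma conj_sgn (b : ℤ) : (starRingEnd ℂ) (sgn b) = sgn b := by
  rw [sgn]; split <;> simp

lemma sgn_mul_self (b : ℤ) : sgn b * sgn b = 1 := by
  rw [sgn]; split <;> norm_num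

lemma eu_mul_period (m : ℕ) (hm : 0 < m) (t : ℤ) (q : ℕ) : eu m t (2*m*q) = 1 := by
  have hm' : (m:ℂ) ≠ 0 := Nat.cast_ne_zero.2 hm.ne'
  have : (Complex.I * t * ((2*m*q : ℕ):ℂ) * (π:ℂ) / m) = (t*q : ℤ) * (2 * π * Complex.I) := by
    push_cast; field_simp
  rw [eu, this, Complex.exp_int_mul_two_pi_mul_I]

lemma eu_add_k (m : ℕ) (t : ℤ) (k l : ℕ) : eu m t (k + l) = eu m t k * eu m t l := by
  rw [eu, eu, eu, ← Complex.exp_add]; congr 1; push_cast; ring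

lemma eu_mod (m : ℕ) (hm : 0 < m) (t : ℤ) (k : ℕ) : eu m t (k % (2*m)) = eu m t k := by
  conv_rhs => rw [← Nat.mod_add_div k (2*m)]
  rw [eu_add_k, eu_mul_period m hm, mul_one]

lemma eu_self (m : ℕ) (hm : 0 < m) (k : ℕ) : eu m (m : ℤ) k = (-1)^k := by
  have hm' : (m:ℂ) ≠ 0 := Nat.cast_ne_zero.2 hm.ne'
  have : (Complex.I * ((m:ℤ):ℂ) * k * (π:ℂ) / m) = k * ((π:ℂ) * Complex.I) := by
    push_cast; field_simp
  rw [eu, this, Complex.exp_nat_mul, Complex.exp_pi_mul_I]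

lemma eu_at_m (m : ℕ) (hm : 0 < m) (t : ℤ) : eu m t m = sgn t := by
  have hm' : (m:ℂ) ≠ 0 := Nat.cast_ne_zero.2 hm.ne'
  have h1 : (Complex.I * t * (m:ℂ) * (π:ℂ) / m) = t * ((π:ℂ) * Complex.I) := by
    push_cast; field_simp
  rw [eu, h1, Complex.exp_int_mul, Complex.exp_pi_mul_I, sgn]
  split
  · next h => exact h.neg_one_zpow
  · next h => exact (Int.not_even_iff_odd.1 h).neg_one_zpow

lemma eu_ne_zero (m : ℕ) (t : ℤ) (k : ℕ) : eu m t k ≠ 0 := Complex.exp_ne_zero _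

lemma eu_flip (m : ℕ) (hm : 0 < m) (t : ℤ) {k : ℕ} (hk : k ≤ 2*m) :
    eu m t (2*m - k) = eu m (-t) k := by
  have h1 : eu m t (2*m - k) * eu m t k = 1 := by
    rw [← eu_add_k]
    have : 2*m - k + k = 2*m*1 := by omega
    rw [this, eu_mul_period m hm]
  have h2 : eu m (-t) k * eu m t k = 1 := by
    rw [← eu_add, neg_add_cancel, eu_t_zero]
  exact mul_right_cancel₀ (eu_ne_zero m t k) (h1.trans h2.symm)

/-! ### Geometric sums -/

lemma eu_pow (m : ℕ) (t : ℤ) (k : ℕ) : eu m t k = (eu m t 1)^k := by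
  rw [eu, eu, ← Complex.exp_nat_mul]; congr 1; push_cast; ring

lemma eu_one_eq_one_iff (m : ℕ) (hm : 0 < m) (t : ℤ) :
    eu m t 1 = 1 ↔ (2*(m:ℤ)) ∣ t := by
  have hm' : (m:ℂ) ≠ 0 := Nat.cast_ne_zero.2 hm.ne'
  have hπ : (π:ℂ) ≠ 0 := Complex.ofReal_ne_zero.2 Real.pi_ne_zero
  rw [eu, Complex.exp_eq_one_iff]
  constructor
  · rintro ⟨n, hn⟩
    refine ⟨n, ?_⟩
    rw [div_eq_iff hm'] at hn
    have h5 : (t:ℂ) * ((π:ℂ)*Complex.I) = ((2*(m:ℤ)*n : ℤ):ℂ) * ((π:ℂ)*Complex.I) := by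
      push_cast at hn ⊢; linear_combination hn
    have h6 := mul_right_cancel₀ (mul_ne_zero hπ Complex.I_ne_zero) h5
    exact_mod_cast h6
  · rintro ⟨n, rfl⟩
    refine ⟨(n : ℤ), ?_⟩
    push_cast
    field_simp

lemma eu_geom (m : ℕ) (hm : 0 < m) (t : ℤ) :
    ∑ k ∈ Finset.range (2*m), eu m t k = Dm m t := by
  have hpow : ∀ k, eu m t k = (eu m t 1)^k := eu_pow m t
  rw [Dm]
  by_cases h : (2*(m:ℤ)) ∣ t
  · simp only [h, if_true]
    rw [Finset.sum_congr rfl (fun k _ => hpow k), (eu_one_eq_one_iff m hm t).2 h]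
    simp
  · simp only [h, if_false]
    have hne : eu m t 1 ≠ 1 := fun hh => h ((eu_one_eq_one_iff m hm t).1 hh)
    rw [Finset.sum_congr rfl (fun k _ => hpow k), geom_sum_eq hne]
    have : (eu m t 1)^(2*m) = 1 := by
      rw [← hpow, eu]
      have : (Complex.I * t * ((2*m : ℕ):ℂ) * (π:ℂ) / m) = (t : ℤ) * (2 * (π:ℂ) * Complex.I) := by
        have hm' : (m:ℂ) ≠ 0 := Nat.cast_ne_zero.2 hm.ne'
        push_cast; field_simp
      rw [this, Complex.exp_int_mul_two_pi_mul_I]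
    rw [this]
    simp

lemma sum_R (m1 m2 : ℕ) (hm1 : 0 < m1) (hm2 : 0 < m2) (t u : ℤ) :
    ∑ i ∈ Finset.range (2*m1) ×ˢ Finset.range (2*m2), eu m1 t i.1 * eu m2 u i.2
      = Dm m1 t * Dm m2 u := by
  rw [Finset.sum_product, ← eu_geom m1 hm1 t, ← eu_geom m2 hm2 u, Finset.sum_mul_sum]

lemma sum_parity_filter (s : Finset (ℕ × ℕ)) (f : ℕ × ℕ → ℂ) :
    ∑ i ∈ s.filter (fun i => Even (i.1+i.2)), f i
      = (∑ i ∈ s, f i + ∑ i ∈ s, f i * ((-1:ℂ))^(i.1+i.2))/2 := by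
  classical
  have h1 : ∑ i ∈ s.filter (fun i => Even (i.1+i.2)), f i * ((-1:ℂ))^(i.1+i.2)
      = ∑ i ∈ s.filter (fun i => Even (i.1+i.2)), f i :=
    Finset.sum_congr rfl (fun i hi => by
      rw [(Finset.mem_filter.1 hi).2.neg_one_pow, mul_one])
  have h2 : ∑ i ∈ s.filter (fun i => ¬ Even (i.1+i.2)), f i * ((-1:ℂ))^(i.1+i.2)
      = ∑ i ∈ s.filter (fun i => ¬ Even (i.1+i.2)), -f i :=
    Finset.sum_congr rfl (fun i hi => by
      rw [(Nat.not_even_iff_odd.1 (Finset.mem_filter.1 hi).2).neg_one_pow]; ring)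
  rw [← Finset.sum_filter_add_sum_filter_not s (fun i => Even (i.1+i.2)) f,
      ← Finset.sum_filter_add_sum_filter_not s (fun i => Even (i.1+i.2))
        (fun i => f i * ((-1:ℂ))^(i.1+i.2)), h1, h2, Finset.sum_neg_distrib]
  ring

/-! ### chi in exponential form -/

lemma chi_eq (m1 m2 : ℕ) (γ : ℤ × ℤ) (i : ℕ × ℕ) :
    chi m1 m2 γ i =
      (eu m1 γ.1 i.1 + sgn γ.2 * eu m1 (-γ.1) i.1) / 2 * eu m2 γ.2 i.2 := by
  have hexp : ((((γ.1 : ℝ) * i.1 * π / m1 : ℝ)) : ℂ) * Complex.I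
      = Complex.I * γ.1 * i.1 * (π:ℂ) / m1 := by push_cast; ring
  have hexp2 : (-(((γ.1 : ℝ) * i.1 * π / m1 : ℝ) : ℂ)) * Complex.I
      = Complex.I * (-γ.1 : ℤ) * i.1 * (π:ℂ) / m1 := by push_cast; ring
  rw [chi, eu, eu, eu, sgn]
  by_cases h : Even γ.2
  · simp only [h, if_true]
    rw [Complex.ofReal_cos, Complex.cos, hexp, hexp2]
    ring
  · simp only [h, if_false]
    rw [Complex.ofReal_sin, Complex.sin, hexp, hexp2]
    ring_nf
    simp only [Complex.I_sq]
    ring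

lemma conj_chi (m1 m2 : ℕ) (γ : ℤ × ℤ) (i : ℕ × ℕ) :
    (starRingEnd ℂ) (chi m1 m2 γ i) =
      (eu m1 (-γ.1) i.1 + sgn γ.2 * eu m1 γ.1 i.1) / 2 * eu m2 (-γ.2) i.2 := by
  rw [chi_eq, map_mul, map_div₀, map_add, map_mul, conj_eu, conj_eu, conj_eu, conj_sgn,
    neg_neg, map_ofNat]

/-! ### Membership lemmas and involution -/

lemma mod_shift (m2 : ℕ) (hm2 : 0 < m2) (x : ℕ) (hx : x < 2*m2) :
    (x + m2) % (2*m2) = if x < m2 then x + m2 else x - m2 := by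
  split
  · exact Nat.mod_eq_of_lt (by omega)
  · rw [Nat.mod_eq_sub_mod (by omega)]
    have : x + m2 - 2*m2 = x - m2 := by omega
    rw [this]
    exact Nat.mod_eq_of_lt (by omega)

lemma mem_indexSet {m1 m2 : ℕ} {j : ℕ × ℕ} :
    j ∈ indexSet m1 m2 ↔ j.1 ≤ m1 ∧ j.2 < 2*m2 ∧ ((j.1 = 0 ∨ j.1 = m1) → j.2 < m2)
      ∧ (j.1 + j.2) % 2 = 0 := by
  simp [indexSet, Finset.mem_filter, Finset.mem_product, Nat.even_iff, Nat.lt_succ_iff]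
  tauto

lemma mem_Lset {m1 m2 : ℕ} {j : ℕ × ℕ} :
    j ∈ Lset m1 m2 ↔ j.1 < 2*m1 ∧ j.2 < 2*m2 ∧ (j.1 + j.2) % 2 = 0 := by
  simp [Lset, Finset.mem_filter, Finset.mem_product, Nat.even_iff]
  tauto

lemma gmap_mem_sdiff {m1 m2 : ℕ} (hm1 : 0 < m1) (hm2 : 0 < m2) (heven : m2 % 2 = 0)
    {i : ℕ × ℕ} (hi : i ∈ indexSet m1 m2) : gmap m1 m2 i ∈ Lset m1 m2 \ indexSet m1 m2 := by
  rw [mem_indexSet] at hi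
  rw [Finset.mem_sdiff, mem_Lset, mem_indexSet, gmap]
  simp only
  rw [mod_shift m2 hm2 i.2 hi.2.1]
  by_cases ha : i.1 = 0
  · rw [if_pos ha]
    by_cases hb : i.2 < m2
    · rw [if_pos hb]; omega
    · rw [if_neg hb]; omega
  · rw [if_neg ha]
    by_cases hb : i.2 < m2
    · rw [if_pos hb]; omega
    · rw [if_neg hb]; omega

lemma gmap_mem_indexSet {m1 m2 : ℕ} (hm1 : 0 < m1) (hm2 : 0 < m2) (heven : m2 % 2 = 0)
    {j : ℕ × ℕ} (hj : j ∈ Lset m1 m2 \ indexSet m1 m2) : gmap m1 m2 j ∈ indexSet m1 m2 := by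
  rw [Finset.mem_sdiff, mem_Lset, mem_indexSet] at hj
  obtain ⟨⟨h1, h2, h3⟩, h4⟩ := hj
  rw [mem_indexSet, gmap]
  simp only
  rw [mod_shift m2 hm2 j.2 h2]
  by_cases ha : j.1 = 0
  · rw [if_pos ha]
    by_cases hb : j.2 < m2
    · rw [if_pos hb]; omega
    · rw [if_neg hb]; omega
  · rw [if_neg ha]
    by_cases hb : j.2 < m2
    · rw [if_pos hb]; omega
    · rw [if_neg hb]; omega

lemma gmap_invol {m1 m2 : ℕ} (hm1 : 0 < m1) (hm2 : 0 < m2)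
    {j : ℕ × ℕ} (hj1 : j.1 < 2*m1) (hj2 : j.2 < 2*m2) : gmap m1 m2 (gmap m1 m2 j) = j := by
  have hms := mod_shift m2 hm2 j.2 hj2
  rw [gmap, gmap]
  simp only
  have hlt : (j.2 + m2) % (2*m2) < 2*m2 := Nat.mod_lt _ (by omega)
  have hms2 := mod_shift m2 hm2 _ hlt
  rw [hms] at hms2 ⊢
  rw [hms2]
  have hj' : (j : ℕ × ℕ) = (j.1, j.2) := rfl
  rw [hj', Prod.mk.injEq]
  constructor
  · by_cases ha : j.1 = 0
    · rw [if_pos ha, if_pos rfl]; omega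
    · rw [if_neg ha, if_neg (by omega : ¬ (2*m1 - j.1 = 0))]; omega
  · by_cases hb : j.2 < m2
    · rw [if_pos hb, if_neg (by omega)]; omega
    · rw [if_neg hb, if_pos (by omega)]; omega

/-! ### Invariance of chi under the involution -/

lemma chi_gmap (m1 m2 : ℕ) (hm1 : 0 < m1) (hm2 : 0 < m2) (γ : ℤ × ℤ)
    {j : ℕ × ℕ} (hj1 : j.1 < 2*m1) (hj2 : j.2 < 2*m2) :
    chi m1 m2 γ (gmap m1 m2 j) = chi m1 m2 γ j := by
  rw [chi_eq, chi_eq, gmap]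
  simp only
  rw [eu_mod m2 hm2, eu_add_k, eu_at_m m2 hm2]
  by_cases ha : j.1 = 0
  · rw [if_pos ha, ha]
    simp only [eu_zero]
    linear_combination (eu m2 γ.2 j.2 / 2) * sgn_mul_self γ.2
  · rw [if_neg ha, eu_flip m1 hm1 γ.1 (by omega : j.1 ≤ 2*m1),
      eu_flip m1 hm1 (-γ.1) (by omega : j.1 ≤ 2*m1), neg_neg]
    linear_combination (eu m1 γ.1 j.1 * eu m2 γ.2 j.2 / 2) * sgn_mul_self γ.2

/-! ### The master summation formula -/

lemma sum_I (m1 m2 : ℕ) (hm1 : 0 < m1) (hm2 : 0 < m2) (heven : m2 % 2 = 0) (γ γ' : ℤ × ℤ) :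
    ∑ i ∈ indexSet m1 m2, chi m1 m2 γ i * (starRingEnd ℂ) (chi m1 m2 γ' i)
      = (1/16) * (Tt m1 γ γ' 0 * Dm m2 (γ.2 - γ'.2)
          + Tt m1 γ γ' m1 * Dm m2 (γ.2 - γ'.2 + m2)) := by
  set F : ℕ × ℕ → ℂ := fun i => chi m1 m2 γ i * (starRingEnd ℂ) (chi m1 m2 γ' i) with hF
  have hsub : indexSet m1 m2 ⊆ Lset m1 m2 := by
    intro j hj
    rw [mem_indexSet] at hj
    rw [mem_Lset]
    omega
  -- step 1 : double counting via the involution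
  have hstep1 : ∑ i ∈ Lset m1 m2, F i = 2 * ∑ i ∈ indexSet m1 m2, F i := by
    rw [← Finset.sum_sdiff hsub]
    have hbij : ∑ j ∈ Lset m1 m2 \ indexSet m1 m2, F j = ∑ i ∈ indexSet m1 m2, F i := by
      refine Finset.sum_nbij' (gmap m1 m2) (gmap m1 m2)
        (fun j hj => gmap_mem_indexSet hm1 hm2 heven hj)
        (fun i hi => gmap_mem_sdiff hm1 hm2 heven hi)
        (fun j hj => ?_) (fun i hi => ?_) (fun j hj => ?_)
      · have h := (Finset.mem_sdiff.1 hj).1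
        rw [mem_Lset] at h
        exact gmap_invol hm1 hm2 h.1 h.2.1
      · have h := hsub hi
        rw [mem_Lset] at h
        exact gmap_invol hm1 hm2 h.1 h.2.1
      · have h := (Finset.mem_sdiff.1 hj).1
        rw [mem_Lset] at h
        rw [hF]
        simp only
        rw [chi_gmap m1 m2 hm1 hm2 γ h.1 h.2.1, chi_gmap m1 m2 hm1 hm2 γ' h.1 h.2.1]
    rw [hbij]
    ring
  -- step 2 : express over the full rectangle
  set R : Finset (ℕ × ℕ) := Finset.range (2*m1) ×ˢ Finset.range (2*m2) with hR
  have hstep2 : ∑ i ∈ Lset m1 m2, F i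
      = (∑ i ∈ R, F i + ∑ i ∈ R, F i * ((-1:ℂ))^(i.1+i.2))/2 :=
    sum_parity_filter R F
  -- expansion of the product of two chi's
  have hexp : ∀ i : ℕ × ℕ, F i
      = (1/4) * (eu m1 (γ.1 - γ'.1) i.1 * eu m2 (γ.2 - γ'.2) i.2
        + sgn γ'.2 * (eu m1 (γ.1 + γ'.1) i.1 * eu m2 (γ.2 - γ'.2) i.2)
        + sgn γ.2 * (eu m1 (-γ.1 - γ'.1) i.1 * eu m2 (γ.2 - γ'.2) i.2)
        + sgn γ.2 * sgn γ'.2 * (eu m1 (γ'.1 - γ.1) i.1 * eu m2 (γ.2 - γ'.2) i.2)) := by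
    intro i
    rw [hF]
    simp only
    rw [chi_eq, conj_chi]
    have e1 : eu m1 (γ.1 - γ'.1) i.1 = eu m1 γ.1 i.1 * eu m1 (-γ'.1) i.1 := by
      rw [show γ.1 - γ'.1 = γ.1 + -γ'.1 by ring, eu_add]
    have e2 : eu m1 (γ.1 + γ'.1) i.1 = eu m1 γ.1 i.1 * eu m1 γ'.1 i.1 := by
      rw [← eu_add]
    have e3 : eu m1 (-γ.1 - γ'.1) i.1 = eu m1 (-γ.1) i.1 * eu m1 (-γ'.1) i.1 := by
      rw [show -γ.1 - γ'.1 = -γ.1 + -γ'.1 by ring, eu_add]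
    have e4 : eu m1 (γ'.1 - γ.1) i.1 = eu m1 (-γ.1) i.1 * eu m1 γ'.1 i.1 := by
      rw [show γ'.1 - γ.1 = -γ.1 + γ'.1 by ring, eu_add]
    have e5 : eu m2 (γ.2 - γ'.2) i.2 = eu m2 γ.2 i.2 * eu m2 (-γ'.2) i.2 := by
      rw [show γ.2 - γ'.2 = γ.2 + -γ'.2 by ring, eu_add]
    rw [e1, e2, e3, e4, e5]
    ring
  have hexp2 : ∀ i ∈ R, F i * ((-1:ℂ))^(i.1+i.2)
      = (1/4) * (eu m1 (γ.1 - γ'.1 + m1) i.1 * eu m2 (γ.2 - γ'.2 + m2) i.2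
        + sgn γ'.2 * (eu m1 (γ.1 + γ'.1 + m1) i.1 * eu m2 (γ.2 - γ'.2 + m2) i.2)
        + sgn γ.2 * (eu m1 (-γ.1 - γ'.1 + m1) i.1 * eu m2 (γ.2 - γ'.2 + m2) i.2)
        + sgn γ.2 * sgn γ'.2 * (eu m1 (γ'.1 - γ.1 + m1) i.1 * eu m2 (γ.2 - γ'.2 + m2) i.2)) := by
    intro i _
    rw [hexp i, pow_add, ← eu_self m1 hm1 i.1, ← eu_self m2 hm2 i.2]
    simp only [eu_add]
    ring
  have hsum1 : ∑ i ∈ R, F i = (1/4) * (Tt m1 γ γ' 0 * Dm m2 (γ.2 - γ'.2)) := by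
    rw [Finset.sum_congr rfl (fun i _ => hexp i)]
    simp only [Finset.sum_add_distrib, ← Finset.mul_sum]
    rw [sum_R m1 m2 hm1 hm2, sum_R m1 m2 hm1 hm2, sum_R m1 m2 hm1 hm2, sum_R m1 m2 hm1 hm2]
    rw [Tt]
    simp only [add_zero]
    ring
  have hsum2 : ∑ i ∈ R, F i * ((-1:ℂ))^(i.1+i.2)
      = (1/4) * (Tt m1 γ γ' m1 * Dm m2 (γ.2 - γ'.2 + m2)) := by
    rw [Finset.sum_congr rfl hexp2]
    simp only [Finset.sum_add_distrib, ← Finset.mul_sum]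
    rw [sum_R m1 m2 hm1 hm2, sum_R m1 m2 hm1 hm2, sum_R m1 m2 hm1 hm2, sum_R m1 m2 hm1 hm2]
    rw [Tt]
    ring
  have := hstep1.symm.trans (hstep2.trans (by rw [hsum1, hsum2]))
  linear_combination this / 2

/-! ### Facts about the Gamma set -/

lemma dvd_win {n x : ℤ} (hn : 0 < n) (hd : n ∣ x) (h0 : -n < x) (h1 : x < 2*n) :
    x = 0 ∨ x = n := by
  rcases le_or_gt x 0 with h | h
  · left; exact Int.eq_zero_of_abs_lt_dvd hd (abs_lt.2 ⟨by omega, by omega⟩)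
  · right
    have h2 := Int.le_of_dvd h hd
    have h3 : n ∣ (x - n) := dvd_sub hd dvd_rfl
    have h4 := Int.eq_zero_of_abs_lt_dvd h3 (abs_lt.2 ⟨by omega, by omega⟩)
    omega

lemma gamma_facts {m1 m2 : ℕ} (hm1 : 0 < m1) (hm2 : 0 < m2) {γ : ℤ × ℤ}
    (hγ : γ ∈ GammaSet m1 m2) :
    0 ≤ γ.1 ∧ γ.1 ≤ m1 ∧ -(m2:ℤ) < γ.2 ∧ γ.2 < m2 ∧
      (m2:ℤ)*γ.1 + m1*γ.2 ≤ m1*m2 ∧ (m2:ℤ)*γ.1 - m1*γ.2 ≤ m1*m2 ∧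
      (γ.1 = 0 → Even γ.2) ∧ (γ.1 = (m1:ℤ) → γ.2 = 0) ∧
      ¬((m2 : ℤ) * γ.1 + (m1 : ℤ) * γ.2 = m1 * m2 ∧ γ.2 ≠ 0) := by
  rw [GammaSet, Finset.mem_filter, Finset.mem_product, Finset.mem_Icc, Finset.mem_Icc] at hγ
  obtain ⟨⟨⟨ha0, ham⟩, _⟩, hbr, hexcl⟩ := hγ
  have hm1' : (0:ℤ) < m1 := by exact_mod_cast hm1
  have hm2' : (0:ℤ) < m2 := by exact_mod_cast hm2
  have hb1 : (γ.2:ℤ) ≤ |γ.2| := le_abs_self _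
  have hb2 : -(γ.2:ℤ) ≤ |γ.2| := neg_le_abs _
  have habs : |γ.2| < m2 := by
    rcases hbr with ⟨h1, h2⟩ | ⟨_, _, h3⟩
    · have h4 : (m2:ℤ)*1 ≤ m2*γ.1 := by
        exact mul_le_mul_of_nonneg_left h1 hm2'.le
      have h5 : (m1:ℤ)*|γ.2| ≤ m1*m2 - m2 := by linarith
      by_contra hc
      push_neg at hc
      have h6 : (m1:ℤ)*m2 ≤ m1*|γ.2| := mul_le_mul_of_nonneg_left hc hm1'.le
      linarith
    · exact h3
  have hineq : (m2:ℤ)*γ.1 + m1*|γ.2| ≤ m1*m2 := by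
    rcases hbr with ⟨_, h2⟩ | ⟨h1, _, h3⟩
    · exact h2
    · have h6 : (m1:ℤ)*|γ.2| ≤ m1*m2 := mul_le_mul_of_nonneg_left habs.le hm1'.le
      rw [h1]
      linarith
  have hc1 : (m1:ℤ)*γ.2 ≤ m1*|γ.2| := mul_le_mul_of_nonneg_left hb1 hm1'.le
  have hc2 : (m1:ℤ)*(-γ.2) ≤ m1*|γ.2| := mul_le_mul_of_nonneg_left hb2 hm1'.le
  refine ⟨ha0, ham, by linarith [abs_lt.1 habs], (abs_lt.1 habs).2, by nlinarith, by nlinarith,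
    ?_, ?_, hexcl⟩
  · intro h0
    rcases hbr with ⟨h1, _⟩ | ⟨_, h2, _⟩
    · omega
    · exact h2
  · intro hm
    rcases hbr with ⟨_, h2⟩ | ⟨h1, _, _⟩
    · rw [hm] at h2
      have : (m1:ℤ)*|γ.2| ≤ 0 := by linarith [mul_comm (m2:ℤ) (m1:ℤ)]
      have h7 : (0:ℤ) ≤ |γ.2| := abs_nonneg _
      have h8 : |γ.2| = 0 := by nlinarith
      exact abs_eq_zero.1 h8
    · omega

lemma no_mid {m1 m2 : ℕ} (hm1 : 0 < m1) (hm2 : 0 < m2) {γ γ' : ℤ × ℤ}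
    (hγ : γ ∈ GammaSet m1 m2) (hγ' : γ' ∈ GammaSet m1 m2)
    (hsum : γ.1 + γ'.1 = m1) (hb : γ'.2 = γ.2 + m2 ∨ γ'.2 = γ.2 - m2) : False := by
  obtain ⟨_, _, g3, g4, g5, g6, _, _, g9⟩ := gamma_facts hm1 hm2 hγ
  obtain ⟨_, _, h3, h4, h5, h6, _, _, h9⟩ := gamma_facts hm1 hm2 hγ'
  rcases hb with hb | hb
  · -- γ'.2 = γ.2 + m2 > 0 and the line equality holds for γ'
    have key : (m2:ℤ)*γ'.1 + m1*γ'.2 = 2*((m1:ℤ)*m2) - ((m2:ℤ)*γ.1 - m1*γ.2) := by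
      linear_combination (m2:ℤ) * hsum + (m1:ℤ) * hb
    have h10 : (m2:ℤ)*γ'.1 + m1*γ'.2 = m1*m2 := by linarith
    exact h9 ⟨h10, by omega⟩
  · have key : (m2:ℤ)*γ.1 + m1*γ.2 = 2*((m1:ℤ)*m2) - ((m2:ℤ)*γ'.1 - m1*γ'.2) := by
      linear_combination (m2:ℤ) * hsum - (m1:ℤ) * hb
    have h10 : (m2:ℤ)*γ.1 + m1*γ.2 = m1*m2 := by linarith
    exact g9 ⟨h10, by omega⟩

/-! ### Orthogonality -/

lemma ortho (m1 m2 : ℕ) (hm1 : 0 < m1) (hm2 : 0 < m2) (heven : m2 % 2 = 0)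
    {γ γ' : ℤ × ℤ} (hγ : γ ∈ GammaSet m1 m2) (hγ' : γ' ∈ GammaSet m1 m2) (hne : γ ≠ γ') :
    discInner m1 m2 (chi m1 m2 γ) (chi m1 m2 γ') = 0 := by
  obtain ⟨g1, g2, g3, g4, _, _, g7, g8, _⟩ := gamma_facts hm1 hm2 hγ
  obtain ⟨h1, h2, h3, h4, _, _, h7, h8, _⟩ := gamma_facts hm1 hm2 hγ'
  have hm1' : (0:ℤ) < m1 := by exact_mod_cast hm1
  have hm2' : (0:ℤ) < m2 := by exact_mod_cast hm2
  have hnea : γ.2 = γ'.2 → γ.1 ≠ γ'.1 := by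
    intro hb ha
    exact hne (Prod.ext ha hb)
  have key1 : Tt m1 γ γ' 0 * Dm m2 (γ.2 - γ'.2) = 0 := by
    by_cases hd : (2*(m2:ℤ)) ∣ (γ.2 - γ'.2)
    · have hb : γ.2 = γ'.2 := by
        have := Int.eq_zero_of_abs_lt_dvd hd (abs_lt.2 ⟨by omega, by omega⟩)
        omega
      have hnd1 : ¬ (2*(m1:ℤ)) ∣ (γ.1 - γ'.1 + 0) := by
        intro h
        have := Int.eq_zero_of_abs_lt_dvd h (abs_lt.2 ⟨by omega, by omega⟩)
        exact hnea hb (by omega)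
      have hnd2 : ¬ (2*(m1:ℤ)) ∣ (γ.1 + γ'.1 + 0) := by
        intro h
        rcases dvd_win (by omega) h (by omega) (by omega) with h' | h' <;>
          exact hnea hb (by omega)
      have hnd3 : ¬ (2*(m1:ℤ)) ∣ (-γ.1 - γ'.1 + 0) := by
        intro h
        have h' : (2*(m1:ℤ)) ∣ (γ.1 + γ'.1 + 0) := by
          have := (dvd_neg (α := ℤ)).2 h
          rw [show γ.1 + γ'.1 + 0 = -(-γ.1 - γ'.1 + 0) by ring]
          exact dvd_neg.2 h
        exact hnd2 h'
      have hnd4 : ¬ (2*(m1:ℤ)) ∣ (γ'.1 - γ.1 + 0) := by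
        intro h
        have h' : (2*(m1:ℤ)) ∣ (γ.1 - γ'.1 + 0) := by
          have := (dvd_neg (α := ℤ)).2 h
          rw [show γ.1 - γ'.1 + 0 = -(γ'.1 - γ.1 + 0) by ring]
          exact dvd_neg.2 h
        exact hnd1 h'
      have hT : Tt m1 γ γ' 0 = 0 := by
        rw [Tt, Dm, Dm, Dm, Dm, if_neg hnd1, if_neg hnd2, if_neg hnd3, if_neg hnd4]
        ring
      rw [hT, zero_mul]
    · rw [Dm, if_neg hd, mul_zero]
  have key2 : Tt m1 γ γ' m1 * Dm m2 (γ.2 - γ'.2 + m2) = 0 := by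
    by_cases hd : (2*(m2:ℤ)) ∣ (γ.2 - γ'.2 + m2)
    · have hb : γ'.2 = γ.2 + m2 ∨ γ'.2 = γ.2 - m2 := by
        rcases dvd_win (by omega) hd (by omega) (by omega) with h' | h' <;> omega
      have hnd1 : ¬ (2*(m1:ℤ)) ∣ (γ.1 - γ'.1 + m1) := by
        intro h
        rcases dvd_win (by omega) h (by omega) (by omega) with h' | h'
        · -- γ.1 = 0, γ'.1 = m1
          have ha : γ.1 = 0 ∧ γ'.1 = (m1:ℤ) := by omega
          have := h8 ha.2
          omega
        · have ha : γ.1 = (m1:ℤ) ∧ γ'.1 = 0 := by omega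
          have := g8 ha.1
          omega
      have hnd4 : ¬ (2*(m1:ℤ)) ∣ (γ'.1 - γ.1 + m1) := by
        intro h
        rcases dvd_win (by omega) h (by omega) (by omega) with h' | h'
        · have ha : γ'.1 = 0 ∧ γ.1 = (m1:ℤ) := by omega
          have := g8 ha.2
          omega
        · have ha : γ'.1 = (m1:ℤ) ∧ γ.1 = 0 := by omega
          have := h8 ha.1
          omega
      have hnd2 : ¬ (2*(m1:ℤ)) ∣ (γ.1 + γ'.1 + m1) := by
        intro h
        rcases dvd_win (by omega) h (by omega) (by omega) with h' | h'
        · omega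
        · exact no_mid hm1 hm2 hγ hγ' (by omega) hb
      have hnd3 : ¬ (2*(m1:ℤ)) ∣ (-γ.1 - γ'.1 + m1) := by
        intro h
        rcases dvd_win (by omega) h (by omega) (by omega) with h' | h'
        · exact no_mid hm1 hm2 hγ hγ' (by omega) hb
        · omega
      have hT : Tt m1 γ γ' m1 = 0 := by
        rw [Tt, Dm, Dm, Dm, Dm, if_neg hnd1, if_neg hnd2, if_neg hnd3, if_neg hnd4]
        ring
      rw [hT, zero_mul]
    · rw [Dm, if_neg hd, mul_zero]
  rw [discInner, sum_I m1 m2 hm1 hm2 heven, key1, key2]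
  simp

/-! ### Norms -/

lemma diag (m1 m2 : ℕ) (hm1 : 0 < m1) (hm2 : 0 < m2) (heven : m2 % 2 = 0)
    {γ : ℤ × ℤ} (hγ : γ ∈ GammaSet m1 m2) :
    discInner m1 m2 (chi m1 m2 γ) (chi m1 m2 γ)
      = if γ.1 = 0 ∨ γ.1 = (m1:ℤ) then 1 else 1/2 := by
  obtain ⟨g1, g2, g3, g4, _, _, g7, g8, _⟩ := gamma_facts hm1 hm2 hγ
  have hm1c : ((m1:ℂ)) ≠ 0 := Nat.cast_ne_zero.2 hm1.ne'
  have hm2c : ((m2:ℂ)) ≠ 0 := Nat.cast_ne_zero.2 hm2.ne'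
  rw [discInner, sum_I m1 m2 hm1 hm2 heven]
  have hd0 : Dm m2 (γ.2 - γ.2) = ((2*m2 : ℕ) : ℂ) := by
    rw [sub_self, Dm, if_pos (dvd_zero _)]
  have hdm : Dm m2 (γ.2 - γ.2 + m2) = 0 := by
    rw [Dm, if_neg]
    intro h
    have h2 : (2*(m2:ℤ)) ∣ (m2:ℤ) := by
      convert h using 1
      ring
    have := Int.le_of_dvd (by omega) h2
    omega
  rw [hd0, hdm, mul_zero, add_zero, Tt]
  have hD0 : Dm m1 (γ.1 - γ.1 + 0) = ((2*m1 : ℕ) : ℂ) := by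
    have hdvd : (2*(m1:ℤ)) ∣ (γ.1 - γ.1 + 0) := ⟨0, by ring⟩
    rw [Dm, if_pos hdvd]
  by_cases hcase : γ.1 = 0 ∨ γ.1 = (m1:ℤ)
  · have hev : Even γ.2 := by
      rcases hcase with h | h
      · exact g7 h
      · rw [g8 h]; exact Even.zero
    have hsgn : sgn γ.2 = 1 := if_pos hev
    have hdd : Dm m1 (γ.1 + γ.1 + 0) = ((2*m1 : ℕ) : ℂ) := by
      rw [Dm, if_pos]
      rcases hcase with h | h
      · rw [h]; simp
      · exact ⟨1, by rw [h]; ring⟩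
    have hdd' : Dm m1 (-γ.1 - γ.1 + 0) = ((2*m1 : ℕ) : ℂ) := by
      rw [Dm, if_pos]
      rcases hcase with h | h
      · rw [h]; simp
      · exact ⟨-1, by rw [h]; ring⟩
    rw [if_pos hcase, hD0, hdd, hdd', hsgn]
    push_cast
    field_simp
    ring
  · push_neg at hcase
    have hnd : ¬ (2*(m1:ℤ)) ∣ (γ.1 + γ.1 + 0) := by
      intro h
      rcases dvd_win (by omega) h (by omega) (by omega) with h' | h' <;> omega
    have hnd' : ¬ (2*(m1:ℤ)) ∣ (-γ.1 - γ.1 + 0) := by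
      intro h
      have h2 : (2*(m1:ℤ)) ∣ (γ.1 + γ.1 + 0) := by
        have := (dvd_neg (α := ℤ)).2 h
        rw [show γ.1 + γ.1 + 0 = -(-γ.1 - γ.1 + 0) by ring]
        exact dvd_neg.2 h
      exact hnd h2
    rw [if_neg (by tauto), hD0, Dm, Dm, if_neg hnd, if_neg hnd', sgn_mul_self]
    push_cast
    field_simp
    ring

/-! ### Cardinalities -/

lemma card_filter_product {α β : Type*} [DecidableEq α] [DecidableEq β]
    (s : Finset α) (t : Finset β) (P : α × β → Prop) [DecidablePred P] :
    ((s ×ˢ t).filter P).card = ∑ a ∈ s, (t.filter (fun b => P (a, b))).card := by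
  classical
  have heq : (s ×ˢ t).filter P
      = s.biUnion (fun a => (t.filter (fun b => P (a, b))).image (fun b => (a, b))) := by
    ext x
    simp only [Finset.mem_filter, Finset.mem_product, Finset.mem_biUnion, Finset.mem_image]
    constructor
    · rintro ⟨⟨h1, h2⟩, hP⟩
      exact ⟨x.1, h1, x.2, ⟨h2, by simpa using hP⟩, Prod.mk.eta⟩
    · rintro ⟨a, ha, b, ⟨hb, hPb⟩, rfl⟩
      exact ⟨⟨ha, hb⟩, hPb⟩
  rw [heq, Finset.card_biUnion]
  · exact Finset.sum_congr rfl (fun a _ =>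
      Finset.card_image_of_injective _ (fun x y h => by simpa using h))
  · intro a _ a' _ hne
    simp only [Finset.disjoint_left, Finset.mem_image]
    rintro x ⟨b, _, rfl⟩ ⟨b', _, h⟩
    exact hne (by simpa using (Prod.ext_iff.1 h).1.symm)

lemma count_parity (n : ℕ) (r : ℕ) :
    ((Finset.range (2*n)).filter (fun k => (k + r) % 2 = 0)).card = n := by
  induction n with
  | zero => simp
  | succ n ih =>
    rw [show 2*(n+1) = (2*n)+1+1 by ring, Finset.range_add_one, Finset.range_add_one,
      Finset.filter_insert, Finset.filter_insert]
    by_cases hr : (2*n + r) % 2 = 0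
    · rw [if_neg (by omega), if_pos hr,
        Finset.card_insert_of_notMem (fun h => by
          have := (Finset.mem_filter.1 h).1
          simp at this), ih]
    · rw [if_pos (by omega), if_neg hr,
        Finset.card_insert_of_notMem (fun h => by
          have := (Finset.mem_filter.1 h).1
          simp at this), ih]

lemma card_indexSet (m1 m2 : ℕ) (hm1 : 0 < m1) (hm2 : 0 < m2) (heven : m2 % 2 = 0) :
    (indexSet m1 m2).card = m1 * m2 := by
  rw [indexSet, card_filter_product]
  have key : ∀ a, ((Finset.range (2*m2)).filter
      (fun b => ((a = 0 ∨ a = m1) → b < m2) ∧ Even (a + b))).card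
      = (if a = 0 ∨ a = m1 then m2/2 else m2) := by
    intro a
    by_cases h : a = 0 ∨ a = m1
    · rw [if_pos h]
      have hset : ((Finset.range (2*m2)).filter
          (fun b => ((a = 0 ∨ a = m1) → b < m2) ∧ Even (a + b)))
          = (Finset.range (2*(m2/2))).filter (fun b => (b + a) % 2 = 0) := by
        ext b
        simp only [Finset.mem_filter, Finset.mem_range, Nat.even_iff]
        constructor
        · rintro ⟨h1, h2, h3⟩; exact ⟨by omega, by omega⟩
        · rintro ⟨h1, h2⟩; exact ⟨by omega, fun _ => by omega, by omega⟩
      rw [hset, count_parity]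
    · rw [if_neg h]
      have hset : ((Finset.range (2*m2)).filter
          (fun b => ((a = 0 ∨ a = m1) → b < m2) ∧ Even (a + b)))
          = (Finset.range (2*m2)).filter (fun b => (b + a) % 2 = 0) := by
        ext b
        simp only [Finset.mem_filter, Finset.mem_range, Nat.even_iff]
        constructor
        · rintro ⟨h1, h2, h3⟩; exact ⟨h1, by omega⟩
        · rintro ⟨h1, h2⟩; exact ⟨h1, fun hc => absurd hc h, by omega⟩
      rw [hset, count_parity]
  rw [Finset.sum_congr rfl (fun a _ => key a)]
  obtain ⟨k, rfl⟩ : ∃ k, m1 = k+1 := ⟨m1-1, by omega⟩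
  rw [Finset.sum_range_succ, Finset.sum_range_succ']
  have hmid : ∀ i ∈ Finset.range k, (if i+1 = 0 ∨ i+1 = k+1 then m2/2 else m2) = m2 := by
    intro i hi
    rw [if_neg (by simp at hi; omega)]
  rw [Finset.sum_congr rfl hmid, Finset.sum_const, Finset.card_range]
  rw [if_pos (Or.inl rfl), if_pos (Or.inr rfl)]
  have h2 : m2/2 + m2/2 = m2 := by omega
  rw [add_assoc, h2, add_mul, one_mul, smul_eq_mul]

-- the per-column count for interior columns
lemma Ncol_mid (m1 m2 : ℕ) (hm1 : 0 < m1) (hm2 : 0 < m2) (a : ℤ)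
    (ha1 : 1 ≤ a) (ha2 : a ≤ (m1:ℤ) - 1) :
    ((Finset.Icc (-(m2:ℤ)) m2).filter (fun b =>
      ((1 ≤ a ∧ (m2 : ℤ) * a + (m1 : ℤ) * |b| ≤ m1 * m2) ∨
        (a = 0 ∧ Even b ∧ |b| < (m2 : ℤ))) ∧
      ¬((m2 : ℤ) * a + (m1 : ℤ) * b = m1 * m2 ∧ b ≠ 0))).card
    = (if (m1:ℤ) ∣ (m2:ℤ)*a then 2*(((m1:ℤ)*m2 - m2*a)/m1).toNat
        else 2*(((m1:ℤ)*m2 - m2*a)/m1).toNat + 1) := by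
  have hm1' : (0:ℤ) < m1 := by exact_mod_cast hm1
  have hm2' : (0:ℤ) < m2 := by exact_mod_cast hm2
  set C : ℤ := (m1:ℤ)*m2 - m2*a with hC
  set K : ℤ := C / m1 with hKdef
  have hmul : (m2:ℤ)*a ≤ m2*((m1:ℤ)-1) := mul_le_mul_of_nonneg_left ha2 hm2'.le
  have hCm2 : (m2:ℤ) ≤ C := by rw [hC]; nlinarith
  have hK0 : 0 ≤ K := Int.ediv_nonneg (by linarith) hm1'.le
  have hKm2 : K ≤ m2 := by
    have h1 : C ≤ (m1:ℤ)*m2 := by rw [hC]; nlinarith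
    have h2 := Int.ediv_le_ediv hm1' h1
    rwa [Int.mul_ediv_cancel_left _ hm1'.ne'] at h2
  have hbK : ∀ b : ℤ, ((m2 : ℤ) * a + (m1 : ℤ) * |b| ≤ m1 * m2) ↔ |b| ≤ K := by
    intro b
    rw [hKdef, Int.le_ediv_iff_mul_le hm1', hC]
    constructor <;> intro h <;> nlinarith
  by_cases hd : (m1:ℤ) ∣ (m2:ℤ)*a
  · have hdC : (m1:ℤ) ∣ C := by
      rw [hC]
      exact dvd_sub (dvd_mul_right _ _) hd
    have hKC : K * m1 = C := Int.ediv_mul_cancel hdC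
    have hKpos : 1 ≤ K := by nlinarith
    have hset : ((Finset.Icc (-(m2:ℤ)) m2).filter (fun b =>
        ((1 ≤ a ∧ (m2 : ℤ) * a + (m1 : ℤ) * |b| ≤ m1 * m2) ∨
          (a = 0 ∧ Even b ∧ |b| < (m2 : ℤ))) ∧
        ¬((m2 : ℤ) * a + (m1 : ℤ) * b = m1 * m2 ∧ b ≠ 0)))
        = (Finset.Icc (-K) K).erase K := by
      ext b
      simp only [Finset.mem_filter, Finset.mem_Icc, Finset.mem_erase]
      constructor
      · rintro ⟨⟨hb1, hb2⟩, hbr, hexcl⟩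
        have hineq : (m2 : ℤ) * a + (m1 : ℤ) * |b| ≤ m1 * m2 := by
          rcases hbr with ⟨_, h⟩ | ⟨h, _, _⟩
          · exact h
          · omega
        have habsK := (hbK b).1 hineq
        have hbne : b ≠ K := by
          intro hbeq
          apply hexcl
          constructor
          · rw [hbeq]; nlinarith
          · omega
        exact ⟨hbne, by cases abs_cases b <;> omega⟩
      · rintro ⟨hbne, hb1, hb2⟩
        have habsK : |b| ≤ K := abs_le.2 ⟨hb1, hb2⟩
        have hineq := (hbK b).2 habsK
        refine ⟨⟨by cases abs_cases b <;> omega, by cases abs_cases b <;> omega⟩,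
          Or.inl ⟨ha1, hineq⟩, ?_⟩
        rintro ⟨heq, _⟩
        apply hbne
        have : (m1:ℤ) * b = K * m1 := by rw [hKC]; linarith [heq]
        have := mul_left_cancel₀ hm1'.ne' (by linarith [this] : (m1:ℤ)*b = m1*K)
        omega
    rw [hset, if_pos hd, Finset.card_erase_of_mem (Finset.mem_Icc.2 ⟨by omega, le_refl _⟩),
      Int.card_Icc]
    omega
  · have hset : ((Finset.Icc (-(m2:ℤ)) m2).filter (fun b =>
        ((1 ≤ a ∧ (m2 : ℤ) * a + (m1 : ℤ) * |b| ≤ m1 * m2) ∨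
          (a = 0 ∧ Even b ∧ |b| < (m2 : ℤ))) ∧
        ¬((m2 : ℤ) * a + (m1 : ℤ) * b = m1 * m2 ∧ b ≠ 0)))
        = Finset.Icc (-K) K := by
      ext b
      simp only [Finset.mem_filter, Finset.mem_Icc]
      constructor
      · rintro ⟨⟨hb1, hb2⟩, hbr, hexcl⟩
        have hineq : (m2 : ℤ) * a + (m1 : ℤ) * |b| ≤ m1 * m2 := by
          rcases hbr with ⟨_, h⟩ | ⟨h, _, _⟩
          · exact h
          · omega
        have habsK := (hbK b).1 hineq
        exact ⟨by cases abs_cases b <;> omega, by cases abs_cases b <;> omega⟩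
      · rintro ⟨hb1, hb2⟩
        have habsK : |b| ≤ K := abs_le.2 ⟨hb1, hb2⟩
        have hineq := (hbK b).2 habsK
        refine ⟨⟨by cases abs_cases b <;> omega, by cases abs_cases b <;> omega⟩,
          Or.inl ⟨ha1, hineq⟩, ?_⟩
        rintro ⟨heq, _⟩
        apply hd
        have hdC : (m1:ℤ) ∣ C := ⟨b, by linarith [heq]⟩
        have : (m1:ℤ) ∣ ((m1:ℤ)*m2 - C) := dvd_sub (dvd_mul_right _ _) hdC
        have harg : (m1:ℤ)*m2 - C = m2*a := by rw [hC]; ring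
        rwa [harg] at this
    rw [hset, if_neg hd, Int.card_Icc]
    omega

lemma Ncol_pair (m1 m2 : ℕ) (hm1 : 0 < m1) (hm2 : 0 < m2) (a : ℤ)
    (ha1 : 1 ≤ a) (ha2 : a ≤ (m1:ℤ) - 1) :
    (if (m1:ℤ) ∣ (m2:ℤ)*a then 2*(((m1:ℤ)*m2 - m2*a)/m1).toNat
        else 2*(((m1:ℤ)*m2 - m2*a)/m1).toNat + 1)
    + (if (m1:ℤ) ∣ (m2:ℤ)*((m1:ℤ)-a) then 2*(((m1:ℤ)*m2 - m2*((m1:ℤ)-a))/m1).toNat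
        else 2*(((m1:ℤ)*m2 - m2*((m1:ℤ)-a))/m1).toNat + 1) = 2*m2 := by
  have hm1' : (0:ℤ) < m1 := by exact_mod_cast hm1
  have hm2' : (0:ℤ) < m2 := by exact_mod_cast hm2
  set C1 : ℤ := (m1:ℤ)*m2 - m2*a with hC1
  set C2 : ℤ := (m1:ℤ)*m2 - m2*((m1:ℤ)-a) with hC2
  set K1 : ℤ := C1 / m1 with hK1
  set K2 : ℤ := C2 / m1 with hK2
  have hmul : (m2:ℤ)*a ≤ m2*((m1:ℤ)-1) := mul_le_mul_of_nonneg_left ha2 hm2'.le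
  have hmul2 : (m2:ℤ)*1 ≤ m2*a := mul_le_mul_of_nonneg_left ha1 hm2'.le
  have hC10 : 0 ≤ C1 := by rw [hC1]; nlinarith
  have hC20 : 0 ≤ C2 := by rw [hC2]; nlinarith
  have hK10 : 0 ≤ K1 := Int.ediv_nonneg hC10 hm1'.le
  have hK20 : 0 ≤ K2 := Int.ediv_nonneg hC20 hm1'.le
  have hdvd_iff : (m1:ℤ) ∣ (m2:ℤ)*((m1:ℤ)-a) ↔ (m1:ℤ) ∣ (m2:ℤ)*a := by
    constructor <;> intro h
    · have h2 : (m1:ℤ) ∣ ((m2:ℤ)*m1 - m2*((m1:ℤ)-a)) := dvd_sub (dvd_mul_left _ _) h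
      have harg : (m2:ℤ)*m1 - m2*((m1:ℤ)-a) = m2*a := by ring
      rwa [harg] at h2
    · have h2 : (m1:ℤ) ∣ ((m2:ℤ)*m1 - m2*a) := dvd_sub (dvd_mul_left _ _) h
      have harg : (m2:ℤ)*m1 - m2*a = m2*((m1:ℤ)-a) := by ring
      rwa [harg] at h2
  by_cases hd : (m1:ℤ) ∣ (m2:ℤ)*a
  · rw [if_pos hd, if_pos (hdvd_iff.2 hd)]
    have hd1 : (m1:ℤ) ∣ C1 := by rw [hC1]; exact dvd_sub (dvd_mul_right _ _) hd
    have hd2 : (m1:ℤ) ∣ C2 := by rw [hC2]; exact dvd_sub (dvd_mul_right _ _) (hdvd_iff.2 hd)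
    have h1 : K1 * m1 = C1 := Int.ediv_mul_cancel hd1
    have h2 : K2 * m1 = C2 := Int.ediv_mul_cancel hd2
    have hsum : K1 + K2 = m2 := by
      have : (K1 + K2) * m1 = (m2:ℤ) * m1 := by rw [add_mul, h1, h2, hC1, hC2]; ring
      exact mul_right_cancel₀ hm1'.ne' this
    omega
  · rw [if_neg hd, if_neg (fun h => hd (hdvd_iff.1 h))]
    have hr1 := Int.mul_ediv_add_emod C1 m1
    have hr2 := Int.mul_ediv_add_emod C2 m1
    set r1 : ℤ := C1 % m1 with hrr1
    set r2 : ℤ := C2 % m1 with hrr2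
    have hr1b : 0 ≤ r1 := Int.emod_nonneg _ hm1'.ne'
    have hr2b : 0 ≤ r2 := Int.emod_nonneg _ hm1'.ne'
    have hr1c : r1 < m1 := Int.emod_lt_of_pos _ hm1'
    have hr2c : r2 < m1 := Int.emod_lt_of_pos _ hm1'
    have hr1ne : r1 ≠ 0 := by
      intro h
      apply hd
      have hdC : (m1:ℤ) ∣ C1 := Int.dvd_of_emod_eq_zero h
      have h2 : (m1:ℤ) ∣ ((m1:ℤ)*m2 - C1) := dvd_sub (dvd_mul_right _ _) hdC
      have harg : (m1:ℤ)*m2 - C1 = m2*a := by rw [hC1]; ring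
      rwa [harg] at h2
    have hkey : (m1:ℤ)*((m2:ℤ) - K1 - K2) = r1 + r2 := by
      rw [hK1, hK2, hrr1, hrr2, hC1, hC2]
      linear_combination - hr1 - hr2
    have hd1 : (m2:ℤ) - K1 - K2 = 1 := by
      rcases lt_trichotomy ((m2:ℤ) - K1 - K2) 1 with h | h | h
      · exfalso
        have h0 : (m2:ℤ) - K1 - K2 ≤ 0 := by omega
        have := mul_nonpos_of_nonneg_of_nonpos hm1'.le h0
        omega
      · exact h
      · exfalso
        have h0 : (2:ℤ) ≤ (m2:ℤ) - K1 - K2 := by omega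
        have := mul_le_mul_of_nonneg_left h0 hm1'.le
        omega
    omega

theorem card_Gamma (m1 m2 : ℕ) (hm1 : 0 < m1) (hm2 : 0 < m2) (heven : m2 % 2 = 0) :
    (GammaSet m1 m2).card = m1 * m2 := by
  have hm1' : (0:ℤ) < m1 := by exact_mod_cast hm1
  have hm2' : (0:ℤ) < m2 := by exact_mod_cast hm2
  rw [GammaSet, card_filter_product]
  set N : ℤ → ℕ := fun a => ((Finset.Icc (-(m2:ℤ)) m2).filter (fun b =>
      ((1 ≤ a ∧ (m2 : ℤ) * a + (m1 : ℤ) * |b| ≤ m1 * m2) ∨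
        (a = 0 ∧ Even b ∧ |b| < (m2 : ℤ))) ∧
      ¬((m2 : ℤ) * a + (m1 : ℤ) * b = m1 * m2 ∧ b ≠ 0))).card with hN
  show ∑ a ∈ Finset.Icc (0:ℤ) m1, N a = m1 * m2
  -- column at 0
  have hN0 : N 0 = m2 - 1 := by
    have hset : ((Finset.Icc (-(m2:ℤ)) m2).filter (fun b =>
        ((1 ≤ (0:ℤ) ∧ (m2 : ℤ) * 0 + (m1 : ℤ) * |b| ≤ m1 * m2) ∨
          ((0:ℤ) = 0 ∧ Even b ∧ |b| < (m2 : ℤ))) ∧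
        ¬((m2 : ℤ) * 0 + (m1 : ℤ) * b = m1 * m2 ∧ b ≠ 0)))
        = (Finset.Icc (-((m2:ℤ)/2 - 1)) ((m2:ℤ)/2 - 1)).image (fun k => 2*k) := by
      ext b
      simp only [Finset.mem_filter, Finset.mem_Icc, Finset.mem_image]
      constructor
      · rintro ⟨_, hbr, _⟩
        have hb : b % 2 = 0 ∧ |b| < (m2:ℤ) := by
          rcases hbr with ⟨h, _⟩ | ⟨_, h2, h3⟩
          · omega
          · exact ⟨Int.even_iff.1 h2, h3⟩
        refine ⟨b/2, ⟨?_, ?_⟩, ?_⟩ <;> cases abs_cases b <;> omega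
      · rintro ⟨k, ⟨hk1, hk2⟩, rfl⟩
        have habs : |2*k| < (m2:ℤ) := by cases abs_cases (2*k) <;> omega
        refine ⟨⟨by omega, by omega⟩, Or.inr ⟨by trivial, ⟨k, by ring⟩, habs⟩, ?_⟩
        rintro ⟨heq, hne⟩
        have h1 : (m1:ℤ) * (2*k) = m1 * m2 := by linarith
        have h2 := mul_left_cancel₀ hm1'.ne' h1
        omega
    show ((Finset.Icc (-(m2:ℤ)) m2).filter (fun b =>
        ((1 ≤ (0:ℤ) ∧ (m2 : ℤ) * 0 + (m1 : ℤ) * |b| ≤ m1 * m2) ∨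
          ((0:ℤ) = 0 ∧ Even b ∧ |b| < (m2 : ℤ))) ∧
        ¬((m2 : ℤ) * 0 + (m1 : ℤ) * b = m1 * m2 ∧ b ≠ 0))).card = m2 - 1
    rw [hset, Finset.card_image_of_injective _ (fun x y h => by omega),
      Int.card_Icc]
    omega
  -- column at m1
  have hNm : N m1 = 1 := by
    have hset : ((Finset.Icc (-(m2:ℤ)) m2).filter (fun b =>
        ((1 ≤ (m1:ℤ) ∧ (m2 : ℤ) * m1 + (m1 : ℤ) * |b| ≤ m1 * m2) ∨
          ((m1:ℤ) = 0 ∧ Even b ∧ |b| < (m2 : ℤ))) ∧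
        ¬((m2 : ℤ) * m1 + (m1 : ℤ) * b = m1 * m2 ∧ b ≠ 0)))
        = {0} := by
      ext b
      simp only [Finset.mem_filter, Finset.mem_Icc, Finset.mem_singleton]
      constructor
      · rintro ⟨_, hbr, _⟩
        rcases hbr with ⟨_, h⟩ | ⟨h, _, _⟩
        · have h1 : (m1:ℤ)*|b| ≤ 0 := by nlinarith
          have h2 : (0:ℤ) ≤ |b| := abs_nonneg _
          have h3 : |b| = 0 := by nlinarith
          exact abs_eq_zero.1 h3
        · omega
      · rintro rfl
        refine ⟨⟨by omega, by omega⟩, Or.inl ⟨by omega, by simp [mul_comm]⟩, by simp⟩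
    show ((Finset.Icc (-(m2:ℤ)) m2).filter (fun b =>
        ((1 ≤ (m1:ℤ) ∧ (m2 : ℤ) * m1 + (m1 : ℤ) * |b| ≤ m1 * m2) ∨
          ((m1:ℤ) = 0 ∧ Even b ∧ |b| < (m2 : ℤ))) ∧
        ¬((m2 : ℤ) * m1 + (m1 : ℤ) * b = m1 * m2 ∧ b ≠ 0))).card = 1
    rw [hset, Finset.card_singleton]
  -- split the sum
  have hsplit : Finset.Icc (0:ℤ) m1 = insert 0 (insert (m1:ℤ) (Finset.Icc 1 ((m1:ℤ)-1))) := by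
    ext x
    simp only [Finset.mem_Icc, Finset.mem_insert]
    omega
  rw [hsplit, Finset.sum_insert (by
      simp only [Finset.mem_insert, Finset.mem_Icc]
      push_neg
      constructor
      · omega
      · omega),
    Finset.sum_insert (by
      simp only [Finset.mem_Icc]
      omega)]
  -- the middle sum via pairing
  have hpair : ∀ a ∈ Finset.Icc (1:ℤ) ((m1:ℤ)-1), N a + N ((m1:ℤ) - a) = 2*m2 := by
    intro a ha
    rw [Finset.mem_Icc] at ha
    show ((Finset.Icc (-(m2:ℤ)) m2).filter (fun b =>
        ((1 ≤ a ∧ (m2 : ℤ) * a + (m1 : ℤ) * |b| ≤ m1 * m2) ∨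
          (a = 0 ∧ Even b ∧ |b| < (m2 : ℤ))) ∧
        ¬((m2 : ℤ) * a + (m1 : ℤ) * b = m1 * m2 ∧ b ≠ 0))).card
      + ((Finset.Icc (-(m2:ℤ)) m2).filter (fun b =>
        ((1 ≤ (m1:ℤ)-a ∧ (m2 : ℤ) * ((m1:ℤ)-a) + (m1 : ℤ) * |b| ≤ m1 * m2) ∨
          ((m1:ℤ)-a = 0 ∧ Even b ∧ |b| < (m2 : ℤ))) ∧
        ¬((m2 : ℤ) * ((m1:ℤ)-a) + (m1 : ℤ) * b = m1 * m2 ∧ b ≠ 0))).card = 2*m2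
    rw [Ncol_mid m1 m2 hm1 hm2 a ha.1 ha.2, Ncol_mid m1 m2 hm1 hm2 ((m1:ℤ)-a) (by omega) (by omega)]
    exact Ncol_pair m1 m2 hm1 hm2 a ha.1 ha.2
  have hrev : ∑ a ∈ Finset.Icc (1:ℤ) ((m1:ℤ)-1), N a
      = ∑ a ∈ Finset.Icc (1:ℤ) ((m1:ℤ)-1), N ((m1:ℤ) - a) := by
    refine Finset.sum_nbij' (fun a => (m1:ℤ) - a) (fun a => (m1:ℤ) - a) ?_ ?_ ?_ ?_ ?_ <;>
      intro a ha <;> simp only [Finset.mem_Icc] at * <;> first | omega | (congr 1; omega)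
  have hmid : ∑ a ∈ Finset.Icc (1:ℤ) ((m1:ℤ)-1), N a = (m1-1) * m2 := by
    have h2 : 2 * ∑ a ∈ Finset.Icc (1:ℤ) ((m1:ℤ)-1), N a
        = ∑ a ∈ Finset.Icc (1:ℤ) ((m1:ℤ)-1), (N a + N ((m1:ℤ) - a)) := by
      rw [Finset.sum_add_distrib, ← hrev]
      ring
    rw [Finset.sum_congr rfl hpair, Finset.sum_const, Int.card_Icc] at h2
    have h3 : (((m1:ℤ) - 1 + 1 - 1).toNat) = m1 - 1 := by omega
    rw [h3, smul_eq_mul] at h2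
    have h4 : (m1-1) * (2*m2) = 2*((m1-1)*m2) := by ring
    rw [h4] at h2
    omega
  rw [hmid, hN0, hNm]
  obtain ⟨k, rfl⟩ : ∃ k, m1 = k+1 := ⟨m1-1, by omega⟩
  have hx : (k+1) * m2 = k * m2 + m2 := by ring
  have hy : (k+1-1) * m2 = k * m2 := by simp
  rw [hx, hy]
  generalize k * m2 = x
  omega

theorem stmt14 (m1 m2 : ℕ) (hm1 : 0 < m1) (hm2 : 0 < m2) (heven : Even m2) :
    (indexSet m1 m2).card = m1 * m2 ∧
    (∀ γ ∈ GammaSet m1 m2, ∀ γ' ∈ GammaSet m1 m2, γ ≠ γ' →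
      discInner m1 m2 (chi m1 m2 γ) (chi m1 m2 γ') = 0) ∧
    (∀ γ ∈ GammaSet m1 m2,
      discInner m1 m2 (chi m1 m2 γ) (chi m1 m2 γ) =
        if γ.1 = 0 ∨ γ.1 = (m1 : ℤ) then 1 else 1 / 2) ∧
    (∀ f : ℕ × ℕ → ℂ, ∃ c : ℤ × ℤ → ℂ, ∀ i ∈ indexSet m1 m2,
      f i = ∑ γ ∈ GammaSet m1 m2, c γ * chi m1 m2 γ i) := by
  have hev : m2 % 2 = 0 := Nat.even_iff.1 heven
  have hm1m2 : ((m1:ℂ) * m2) ≠ 0 :=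
    mul_ne_zero (Nat.cast_ne_zero.2 hm1.ne') (Nat.cast_ne_zero.2 hm2.ne')
  refine ⟨card_indexSet m1 m2 hm1 hm2 hev,
    fun γ hγ γ' hγ' hne => ortho m1 m2 hm1 hm2 hev hγ hγ' hne,
    fun γ hγ => diag m1 m2 hm1 hm2 hev hγ, ?_⟩
  -- completeness
  intro f
  classical
  -- the ambient space and the family
  set v : ↥(GammaSet m1 m2) → (↥(indexSet m1 m2) → ℂ) :=
    fun γ => fun i => chi m1 m2 (γ : ℤ × ℤ) (i : ℕ × ℕ) with hv
  -- the un-normalized inner products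
  have hW : ∀ γ γ' : ℤ × ℤ, ∑ j ∈ indexSet m1 m2, chi m1 m2 γ j * (starRingEnd ℂ) (chi m1 m2 γ' j)
      = ((m1:ℂ) * m2) * discInner m1 m2 (chi m1 m2 γ) (chi m1 m2 γ') := by
    intro γ γ'
    rw [discInner, ← mul_assoc, mul_one_div, div_self hm1m2, one_mul]
  have hWzero : ∀ γ γ' : ℤ × ℤ, γ ∈ GammaSet m1 m2 → γ' ∈ GammaSet m1 m2 → γ ≠ γ' →
      ∑ j ∈ indexSet m1 m2, chi m1 m2 γ j * (starRingEnd ℂ) (chi m1 m2 γ' j) = 0 := by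
    intro γ γ' hγ hγ' hne
    rw [hW, ortho m1 m2 hm1 hm2 hev hγ hγ' hne, mul_zero]
  have hWdiag : ∀ γ : ℤ × ℤ, γ ∈ GammaSet m1 m2 →
      ∑ j ∈ indexSet m1 m2, chi m1 m2 γ j * (starRingEnd ℂ) (chi m1 m2 γ j) ≠ 0 := by
    intro γ hγ
    rw [hW, diag m1 m2 hm1 hm2 hev hγ]
    split
    · simpa using hm1m2
    · intro hc
      rcases mul_eq_zero.1 hc with hc | hc
      · exact hm1m2 hc
      · norm_num at hc
  -- linear independence
  have hli : LinearIndependent ℂ v := by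
    rw [Fintype.linearIndependent_iff]
    intro g hg γ0
    have hzero : ∀ j ∈ indexSet m1 m2,
        ∑ γ : ↥(GammaSet m1 m2), g γ * chi m1 m2 (γ : ℤ × ℤ) j = 0 := by
      intro j hj
      have := congrFun hg ⟨j, hj⟩
      rw [Finset.sum_apply] at this
      simpa [hv] using this
    have hswap : ∑ j ∈ indexSet m1 m2, (∑ γ : ↥(GammaSet m1 m2),
        g γ * chi m1 m2 (γ : ℤ × ℤ) j) * (starRingEnd ℂ) (chi m1 m2 (γ0 : ℤ × ℤ) j) = 0 := by
      rw [Finset.sum_congr rfl (fun j hj => by rw [hzero j hj, zero_mul]), Finset.sum_const,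
        smul_zero]
    have hswap2 : ∑ γ : ↥(GammaSet m1 m2), g γ * ∑ j ∈ indexSet m1 m2,
        chi m1 m2 (γ : ℤ × ℤ) j * (starRingEnd ℂ) (chi m1 m2 (γ0 : ℤ × ℤ) j) = 0 := by
      calc ∑ γ : ↥(GammaSet m1 m2), g γ * ∑ j ∈ indexSet m1 m2,
            chi m1 m2 (γ : ℤ × ℤ) j * (starRingEnd ℂ) (chi m1 m2 (γ0 : ℤ × ℤ) j)
          = ∑ γ : ↥(GammaSet m1 m2), ∑ j ∈ indexSet m1 m2,
            g γ * (chi m1 m2 (γ : ℤ × ℤ) j * (starRingEnd ℂ) (chi m1 m2 (γ0 : ℤ × ℤ) j)) := by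
            refine Finset.sum_congr rfl (fun γ _ => ?_)
            rw [Finset.mul_sum]
        _ = ∑ j ∈ indexSet m1 m2, ∑ γ : ↥(GammaSet m1 m2),
            g γ * (chi m1 m2 (γ : ℤ × ℤ) j * (starRingEnd ℂ) (chi m1 m2 (γ0 : ℤ × ℤ) j)) :=
            Finset.sum_comm
        _ = ∑ j ∈ indexSet m1 m2, (∑ γ : ↥(GammaSet m1 m2),
            g γ * chi m1 m2 (γ : ℤ × ℤ) j) * (starRingEnd ℂ) (chi m1 m2 (γ0 : ℤ × ℤ) j) := by
            refine Finset.sum_congr rfl (fun j _ => ?_)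
            rw [Finset.sum_mul]
            refine Finset.sum_congr rfl (fun γ _ => ?_)
            ring
        _ = 0 := hswap
    have honly : ∀ γ : ↥(GammaSet m1 m2), γ ≠ γ0 →
        g γ * ∑ j ∈ indexSet m1 m2,
          chi m1 m2 (γ : ℤ × ℤ) j * (starRingEnd ℂ) (chi m1 m2 (γ0 : ℤ × ℤ) j) = 0 := by
      intro γ hne
      rw [hWzero _ _ γ.2 γ0.2 (fun hc => hne (Subtype.ext hc)), mul_zero]
    rw [Fintype.sum_eq_single γ0 honly] at hswap2
    rcases mul_eq_zero.1 hswap2 with hc | hc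
    · exact hc
    · exact absurd hc (hWdiag _ γ0.2)
  -- dimension count
  have hnonempty : Nonempty ↥(GammaSet m1 m2) := by
    rw [← Fintype.card_pos_iff, Fintype.card_coe, card_Gamma m1 m2 hm1 hm2 hev]
    exact Nat.mul_pos hm1 hm2
  have hcard : Fintype.card ↥(GammaSet m1 m2)
      = Module.finrank ℂ (↥(indexSet m1 m2) → ℂ) := by
    rw [Fintype.card_coe, card_Gamma m1 m2 hm1 hm2 hev, Module.finrank_pi, Fintype.card_coe,
      card_indexSet m1 m2 hm1 hm2 hev]
  let B := basisOfLinearIndependentOfCardEqFinrank hli hcard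
  have hB : ⇑B = v := coe_basisOfLinearIndependentOfCardEqFinrank hli hcard
  set F : ↥(indexSet m1 m2) → ℂ := fun i => f (i : ℕ × ℕ) with hF
  have hrepr := B.sum_repr F
  refine ⟨fun γ => if h : γ ∈ GammaSet m1 m2 then B.repr F ⟨γ, h⟩ else 0, ?_⟩
  intro i hi
  rw [← Finset.sum_coe_sort (GammaSet m1 m2)
    (fun γ => (if h : γ ∈ GammaSet m1 m2 then B.repr F ⟨γ, h⟩ else 0) * chi m1 m2 γ i)]
  have hterm : ∀ γ : ↥(GammaSet m1 m2),
      (if h : (γ:ℤ×ℤ) ∈ GammaSet m1 m2 then B.repr F ⟨(γ:ℤ×ℤ), h⟩ else 0) * chi m1 m2 (γ:ℤ×ℤ) i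
      = B.repr F γ * chi m1 m2 (γ:ℤ×ℤ) i := by
    intro γ
    rw [dif_pos γ.2]
  rw [Finset.sum_congr rfl (fun γ _ => hterm γ)]
  have := congrFun hrepr ⟨i, hi⟩
  rw [Finset.sum_apply] at this
  calc f i = F ⟨i, hi⟩ := rfl
    _ = ∑ γ : ↥(GammaSet m1 m2), B.repr F γ * chi m1 m2 (γ:ℤ×ℤ) i := by
        rw [← this]
        refine (Finset.sum_congr rfl (fun γ _ => ?_)).symm
        rw [hB, hv]
        simp [smul_eq_mul]
end

section
/- For every γ = (γ1,γ2) ∈ ℤ², the integral (1/(4π)) ∫₀^{2π} ∫₀^{π} X_γ(θ,φ) sin θ dθ dφ equals 1/(1 − γ1²) if γ2 = 0 and γ1 is even, and equals 0 otherwise. -/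
open Real Complex MeasureTheory intervalIntegral

/-- The parity-modified double Fourier basis functions X_γ. -/
noncomputable def Xbasis (γ : ℤ × ℤ) (θ φ : ℝ) : ℂ :=
  if Even γ.2 then
    (Real.cos (γ.1 * θ) : ℂ) * Complex.exp (Complex.I * γ.2 * φ)
  else
    Complex.I * (Real.sin (γ.1 * θ) : ℂ) * Complex.exp (Complex.I * γ.2 * φ)

lemma aux_real (n : ℝ) (hn : n ^ 2 ≠ 1) :
    ∫ θ in (0:ℝ)..π, Real.cos (n * θ) * Real.sin θ
      = (-Real.cos (n * π) - 1) / (n ^ 2 - 1) := by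
  have key : ∀ θ ∈ Set.uIcc (0:ℝ) π,
      HasDerivAt (fun θ : ℝ =>
        (Real.cos (n * θ) * Real.cos θ + n * Real.sin (n * θ) * Real.sin θ) / (n ^ 2 - 1))
        (Real.cos (n * θ) * Real.sin θ) θ := by
    intro θ _
    have hmul : HasDerivAt (fun θ : ℝ => n * θ) n θ := by
      simpa using (hasDerivAt_id θ).const_mul n
    have hc : HasDerivAt (fun θ : ℝ => Real.cos (n * θ)) (-Real.sin (n * θ) * n) θ :=
      (Real.hasDerivAt_cos (n * θ)).comp θ hmul
    have hs : HasDerivAt (fun θ : ℝ => Real.sin (n * θ)) (Real.cos (n * θ) * n) θ :=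
      (Real.hasDerivAt_sin (n * θ)).comp θ hmul
    have h1 : HasDerivAt (fun θ : ℝ => Real.cos (n * θ) * Real.cos θ)
        (-Real.sin (n * θ) * n * Real.cos θ + Real.cos (n * θ) * (-Real.sin θ)) θ :=
      hc.mul (Real.hasDerivAt_cos θ)
    have h2 : HasDerivAt (fun θ : ℝ => n * Real.sin (n * θ) * Real.sin θ)
        (n * (Real.cos (n * θ) * n) * Real.sin θ + n * Real.sin (n * θ) * Real.cos θ) θ :=
      ((hs.const_mul n).mul (Real.hasDerivAt_sin θ))
    have := (h1.add h2).div_const (n ^ 2 - 1)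
    refine this.congr_deriv ?_
    have h1' : n ^ 2 - 1 ≠ 0 := sub_ne_zero.mpr hn
    field_simp
    ring
  rw [intervalIntegral.integral_eq_sub_of_hasDerivAt key
    ((Continuous.mul (by fun_prop) Real.continuous_sin).intervalIntegrable 0 π)]
  simp [Real.cos_pi, Real.sin_pi]
  ring

lemma aux_theta (n : ℤ) :
    ∫ θ in (0:ℝ)..π, Real.cos (n * θ) * Real.sin θ
      = if Even n then 2 / (1 - (n:ℝ) ^ 2) else 0 := by
  by_cases hE : Even n
  · have hn : (n:ℝ) ^ 2 ≠ 1 := by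
      intro h
      have h' : (n:ℝ) = 1 ∨ (n:ℝ) = -1 := sq_eq_one_iff.mp h
      have : n = 1 ∨ n = -1 := by exact_mod_cast h'
      rcases this with h | h <;> subst h <;> simp [Int.even_iff] at hE
    rw [aux_real n hn]
    obtain ⟨k, hk⟩ := id hE
    have hcos : Real.cos ((n:ℝ) * π) = 1 := by
      have harg : (n:ℝ) * π = k * (2 * π) := by push_cast [hk]; ring
      rw [harg, Real.cos_int_mul_two_pi]
    rw [if_pos hE, hcos]
    have d1 : (n:ℝ) ^ 2 - 1 ≠ 0 := sub_ne_zero.mpr hn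
    have d2 : 1 - (n:ℝ) ^ 2 ≠ 0 := sub_ne_zero.mpr (Ne.symm hn)
    field_simp
    ring
  · by_cases h1 : (n:ℝ) ^ 2 = 1
    · have h2 : n = 1 ∨ n = -1 := by
        have h' : (n:ℝ) = 1 ∨ (n:ℝ) = -1 := sq_eq_one_iff.mp h1
        exact_mod_cast h'
      rw [if_neg hE]
      rcases h2 with h | h <;> subst h <;>
        · push_cast
          simp only [Real.cos_neg, neg_mul, one_mul,
            mul_comm (Real.cos _) (Real.sin _)]
          simp [integral_sin_mul_cos₁, Real.sin_pi]
    · rw [aux_real n h1]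
      obtain ⟨k, hk⟩ := Int.not_even_iff_odd.mp hE
      have hcos : Real.cos ((n:ℝ) * π) = -1 := by
        have h2 : ((n:ℝ)) = 2 * k + 1 := by push_cast [hk]; ring
        rw [h2, add_mul, one_mul, Real.cos_add_pi]
        have harg : (2:ℝ) * k * π = k * (2 * π) := by ring
        rw [harg, Real.cos_int_mul_two_pi]
      rw [if_neg hE, hcos]
      ring

theorem stmt17 (γ : ℤ × ℤ) :
    (1 / (4 * (π : ℂ))) *
      (∫ φ in (0:ℝ)..(2 * π), ∫ θ in (0:ℝ)..π, Xbasis γ θ φ * (Real.sin θ : ℂ)) =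
      if γ.2 = 0 ∧ Even γ.1 then 1 / (1 - (γ.1 : ℂ) ^ 2) else 0 := by
  by_cases h2 : γ.2 = 0
  · have hEven : Even γ.2 := by simp [h2]
    have hX : ∀ θ φ : ℝ, Xbasis γ θ φ = (Real.cos (γ.1 * θ) : ℂ) := by
      intro θ φ; simp [Xbasis, hEven, h2]
    simp only [hX]
    have hC : (∫ θ in (0:ℝ)..π, ((Real.cos (γ.1 * θ) : ℂ) * (Real.sin θ : ℂ)))
        = ((∫ θ in (0:ℝ)..π, Real.cos (γ.1 * θ) * Real.sin θ : ℝ) : ℂ) := by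
      simp_rw [← Complex.ofReal_mul]
      rw [intervalIntegral.integral_ofReal]
    rw [hC, aux_theta γ.1, intervalIntegral.integral_const]
    by_cases hE1 : Even γ.1
    · rw [if_pos hE1, if_pos (show γ.2 = 0 ∧ Even γ.1 from ⟨h2, hE1⟩)]
      have hn : (γ.1 : ℂ) ^ 2 ≠ 1 := by
        intro h
        have h' : (γ.1 : ℂ) = 1 ∨ (γ.1 : ℂ) = -1 := sq_eq_one_iff.mp h
        have : γ.1 = 1 ∨ γ.1 = -1 := by exact_mod_cast h'
        rcases this with h | h <;> rw [h] at hE1 <;> simp [Int.even_iff] at hE1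
      have d2 : 1 - (γ.1 : ℂ) ^ 2 ≠ 0 := sub_ne_zero.mpr (Ne.symm hn)
      have d2' : 1 - (γ.1 : ℝ) ^ 2 ≠ 0 := by
        intro h
        apply d2
        have := congrArg (Complex.ofReal) h
        push_cast at this
        simpa using this
      have hπ : (π : ℂ) ≠ 0 := by exact_mod_cast Real.pi_ne_zero
      rw [sub_zero, real_smul]
      push_cast
      field_simp
      norm_num
    · rw [if_neg hE1, if_neg (show ¬(γ.2 = 0 ∧ Even γ.1) from fun h => hE1 h.2)]
      simp
  · rw [if_neg (by tauto)]
    have hXc : ∀ θ φ : ℝ, Xbasis γ θ φ * (Real.sin θ : ℂ)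
        = ((if Even γ.2 then (Real.cos (γ.1 * θ) : ℂ)
            else Complex.I * (Real.sin (γ.1 * θ) : ℂ)) * (Real.sin θ : ℂ))
          * Complex.exp (Complex.I * γ.2 * φ) := by
      intro θ φ
      by_cases hE : Even γ.2 <;> simp [Xbasis, hE] <;> ring
    simp only [hXc]
    simp only [intervalIntegral.integral_mul_const]
    rw [intervalIntegral.integral_const_mul]
    have hc : Complex.I * (γ.2 : ℂ) ≠ 0 :=
      mul_ne_zero Complex.I_ne_zero (by exact_mod_cast h2)
    rw [integral_exp_mul_complex hc]
    have h1 : Complex.exp (Complex.I * (γ.2 : ℂ) * ((2 * π : ℝ) : ℂ)) = 1 := by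
      rw [show Complex.I * (γ.2 : ℂ) * ((2 * π : ℝ) : ℂ)
          = (γ.2 : ℂ) * (2 * π * Complex.I) by push_cast; ring]
      exact Complex.exp_int_mul_two_pi_mul_I γ.2
    simp only [h1, Complex.ofReal_zero, mul_zero, Complex.exp_zero, sub_self, zero_div]
end
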